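/- Let H be a complex Hilbert space, let (V_l)_{l∈ℕ} be a family of nonzero finite-dimensional, pairwise orthogonal closed subspaces of H whose algebraic span is dense in H, and let A : H → H be a bounded linear operator with A(V_l) ⊆ V_l for every l. Then the point spectrum of A is the union of the point spectra of its blocks: a complex number λ is an eigenvalue of A if and only if there exist l ∈ ℕ and a nonzero vector v ∈ V_l with A v = λ v. -/

import Mathlib

open scoped InnerProductSpace

/-- For a bounded operator leaving invariant each member of a complete orthogonal family of
nonzero finite-dimensional closed subspaces, the point spectrum is the union of the point
spectra of its blocks. -/
theorem invariant_operator_point_spectrum_eq_union_of_blocks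
    {H : Type*} [NormedAddCommGroup H] [InnerProductSpace ℂ H] [CompleteSpace H]
    (V : ℕ → Submodule ℂ H) [∀ l, FiniteDimensional ℂ (V l)]
    (hV0 : ∀ l, V l ≠ ⊥)
    (hVc : ∀ l, IsClosed (V l : Set H))
    (horth : ∀ l m, l ≠ m → ∀ x ∈ V l, ∀ y ∈ V m, ⟪x, y⟫_ℂ = 0)
    (hdense : Dense ((⨆ l, V l : Submodule ℂ H) : Set H))
    (A : H →L[ℂ] H) (hA : ∀ l, ∀ x ∈ V l, A x ∈ V l) :
    ∀ lam : ℂ, (∃ u : H, u ≠ 0 ∧ A u = lam • u) ↔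
      ∃ l : ℕ, ∃ v ∈ V l, v ≠ 0 ∧ A v = lam • v := by
  intro lam
  -- orthogonal projections onto the blocks
  set P : ℕ → H →L[ℂ] H := fun l => (V l).subtypeL.comp ((V l).orthogonalProjectionOnto) with hP
  have hPmem : ∀ l x, P l x ∈ V l := fun l x => ((V l).orthogonalProjectionOnto x).2
  have hPself : ∀ l x, x ∈ V l → P l x = x := by
    intro l x hx
    simpa [hP] using (Submodule.starProjection_eq_self_iff (K := V l)).2 hx
  have hPzero : ∀ l x, x ∈ (V l)ᗮ → P l x = 0 := by
    intro l x hx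
    simp [hP, Submodule.orthogonalProjectionOnto_apply_of_mem_orthogonal hx]
  have hmemOrth : ∀ l m, m ≠ l → ∀ x ∈ V m, x ∈ (V l)ᗮ := by
    intro l m hml x hx
    rw [Submodule.mem_orthogonal]
    intro y hy
    exact horth l m (fun h => hml h.symm) y hy x hx
  -- P l commutes with A
  have hcomm : ∀ l x, P l (A x) = A (P l x) := by
    intro l
    suffices h : (P l).comp A = A.comp (P l) by
      intro x; exact DFunLike.congr_fun h x
    apply ContinuousLinearMap.coeFn_injective
    refine Continuous.ext_on hdense ((P l).comp A).continuous (A.comp (P l)).continuous ?_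
    rintro x (hx : x ∈ (⨆ l, V l : Submodule ℂ H))
    induction hx using Submodule.iSup_induction' with
    | mem m x hx =>
      by_cases hml : m = l
      · subst hml
        simp only [ContinuousLinearMap.comp_apply]
        rw [hPself m x hx, hPself m (A x) (hA m x hx)]
      · simp only [ContinuousLinearMap.comp_apply]
        rw [hPzero l x (hmemOrth l m hml x hx),
          hPzero l (A x) (hmemOrth l m hml (A x) (hA m x hx))]
        simp
    | zero => simp
    | add x y _ _ hx hy =>
      simp only [ContinuousLinearMap.comp_apply, map_add] at hx hy ⊢
      rw [hx, hy]
  constructor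
  · rintro ⟨u, hu, hAu⟩
    -- some projection of u is nonzero
    have : ∃ l, P l u ≠ 0 := by
      by_contra h
      push_neg at h
      apply hu
      have horthmem : u ∈ (⨆ l, V l : Submodule ℂ H)ᗮ := by
        rw [← Submodule.iInf_orthogonal]
        refine Submodule.mem_iInf _ |>.2 fun l => ?_
        have := h l
        simp only [hP, ContinuousLinearMap.comp_apply] at this
        have h0 : (V l).orthogonalProjectionOnto u = 0 := by
          ext
          simpa using this
        exact Submodule.orthogonalProjectionOnto_eq_zero_iff.1 h0
      have htop : (⨆ l, V l : Submodule ℂ H).topologicalClosure = ⊤ :=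
        Submodule.dense_iff_topologicalClosure_eq_top.1 hdense
      have hbot : (⨆ l, V l : Submodule ℂ H)ᗮ = ⊥ :=
        Submodule.topologicalClosure_eq_top_iff.1 htop
      simpa [hbot] using horthmem
    obtain ⟨l, hPl⟩ := this
    refine ⟨l, P l u, hPmem l u, hPl, ?_⟩
    calc A (P l u) = P l (A u) := (hcomm l u).symm
      _ = lam • P l u := by rw [hAu, map_smul]
  · rintro ⟨l, v, _, hv, hAv⟩
    exact ⟨v, hv, hAv⟩
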